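/- The tuple c = (2,1,1,−1,0) ∈ ℤ^5 is a 1-quiddity cycle over ℤ, and there exist no quiddity cycles a ∈ ℤ^k and b ∈ ℤ^l over ℤ with k, l > 2, k + l − 2 = 5, and b irreducible over ℤ, such that c = a ⊕ b (equality of tuples, with no dihedral action applied). Hence a factorization of the form c = (((a₁ ⊕ a₂) ⊕ a₃) ⊕ …) ⊕ aₙ into irreducible factors without dihedral actions does not always exist. -/

import Mathlib

open Matrix

/-- The 2×2 matrix `[[x, -1], [1, 0]]` associated to an entry of a quiddity cycle. -/
def qMat {R : Type*} [CommRing R] (x : R) : Matrix (Fin 2) (Fin 2) R := !![x, -1; 1, 0]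

/-- `c` is a `lam`-quiddity cycle: the product `∏ [[cₜ,−1],[1,0]]` equals `lam • Id`. -/
def IsQC {R : Type*} [CommRing R] (lam : R) (c : List R) : Prop :=
  (c.map qMat).prod = lam • (1 : Matrix (Fin 2) (Fin 2) R)

/-- `a ⊕ b = (a₁+b_l, a₂, …, a_{k−1}, a_k+b₁, b₂, …, b_{l−1})`. -/
def oplus {R : Type*} [CommRing R] (a b : List R) : List R :=
  (a.head?.getD 0 + b.getLast?.getD 0) ::
    ((a.drop 1).dropLast ++ (a.getLast?.getD 0 + b.head?.getD 0) :: (b.drop 1).dropLast)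

/-- Dihedral equivalence: `a` is a cyclic rotation of `b` or of the reversal of `b`,
i.e. `a = b^σ` for some `σ` in the dihedral group acting on `n` points. -/
def DihEquiv {α : Type*} (a b : List α) : Prop :=
  ∃ i : ℕ, a = b.rotate i ∨ a = b.reverse.rotate i

/-- The action of a dihedral group element, encoded by a rotation amount and a reversal flag. -/
def applyDih {α : Type*} (p : ℕ × Bool) (c : List α) : List α :=
  if p.2 then c.reverse.rotate p.1 else c.rotate p.1

/-- `c` (of length `> 2`) is reducible over ℤ as a `lam`-quiddity cycle. -/
def ReducibleZ (lam : ℤ) (c : List ℤ) : Prop :=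
  ∃ (lam' lam'' : ℤ) (a b : List ℤ),
    (lam' = 1 ∨ lam' = -1) ∧ (lam'' = 1 ∨ lam'' = -1) ∧
    IsQC lam' a ∧ IsQC lam'' b ∧
    2 < a.length ∧ 2 < b.length ∧ c.length = a.length + b.length - 2 ∧
    lam = -(lam' * lam'') ∧ DihEquiv c (oplus a b)


private lemma qc3 (lam x y z : ℤ) (hl : lam = 1 ∨ lam = -1) (h : IsQC lam [x, y, z]) :
    x = -lam ∧ y = -lam ∧ z = -lam := by
  rw [IsQC, show ([x,y,z].map qMat) = [qMat x, qMat y, qMat z] from rfl] at h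
  simp only [List.prod_cons, List.prod_nil, mul_one, qMat, Matrix.mul_fin_two,
    Matrix.one_fin_two, Matrix.smul_of, Matrix.smul_cons, Matrix.smul_empty, smul_eq_mul] at h
  rw [← Matrix.ext_iff] at h
  simp only [Fin.forall_fin_two, Matrix.of_apply, Matrix.cons_val', Matrix.cons_val_zero,
    Matrix.cons_val_one, Matrix.head_cons, Matrix.head_fin_const, Matrix.empty_val',
    Matrix.cons_val_fin_one] at h
  obtain ⟨⟨h1, h2⟩, h3, h4⟩ := h
  rcases hl with rfl | rfl <;> refine ⟨?_, ?_, ?_⟩ <;> nlinarith [h1, h2, h3, h4]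

/-- `c = (2,1,1,−1,0)` is a 1-quiddity cycle over ℤ, and there are no quiddity cycles
`a`, `b` over ℤ with lengths `k, l > 2`, `k + l − 2 = 5`, `b` irreducible over ℤ, and
`c = a ⊕ b` (equality of tuples, no dihedral action). -/
theorem stmt12 :
    IsQC (1 : ℤ) [2, 1, 1, -1, 0] ∧
    ¬ ∃ (lam' lam'' : ℤ) (a b : List ℤ),
        (lam' = 1 ∨ lam' = -1) ∧ (lam'' = 1 ∨ lam'' = -1) ∧
        IsQC lam' a ∧ IsQC lam'' b ∧
        2 < a.length ∧ 2 < b.length ∧ a.length + b.length - 2 = 5 ∧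
        ¬ ReducibleZ lam'' b ∧
        ([2, 1, 1, -1, 0] : List ℤ) = oplus a b := by
  constructor
  · simp [IsQC, qMat, Matrix.mul_fin_two, Matrix.one_fin_two, Matrix.smul_of]
  rintro ⟨lam', lam'', a, b, hl', hl'', hqa, hqb, ha2, hb2, hlen, hirr, heq⟩
  have hcase : (a.length = 3 ∧ b.length = 4) ∨ (a.length = 4 ∧ b.length = 3) := by omega
  rcases hcase with ⟨ha3, hb4⟩ | ⟨ha4, hb3⟩
  · -- a has length 3, b has length 4
    obtain ⟨a1, a2, a3, rfl⟩ := List.length_eq_three.mp ha3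
    obtain ⟨b1, b⟩ : ∃ x l, b = x :: l := by
      cases b with
      | nil => simp at hb4
      | cons x l => exact ⟨x, l, rfl⟩
    obtain ⟨l, rfl⟩ := b
    obtain ⟨b2, b3, b4, rfl⟩ : ∃ x y z, l = [x, y, z] := by
      apply List.length_eq_three.mp; simp at hb4; omega
    obtain ⟨e1, e2, e3⟩ := qc3 lam' a1 a2 a3 hl' hqa
    simp only [oplus] at heq
    simp at heq
    obtain ⟨q1, q2, q3, q4, q5⟩ := heq
    -- q2 : 1 = a2, with a2 = -lam', so lam' = -1
    have hlam' : lam' = -1 := by omega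
    have hb1 : b1 = 0 := by omega
    have hb4' : b4 = 1 := by omega
    have hb2' : b2 = -1 := by omega
    have hb3' : b3 = 0 := by omega
    subst hb1 hb4' hb2' hb3'
    have hlam'' : lam'' = 1 := by
      simp [IsQC, qMat, Matrix.mul_fin_two, Matrix.one_fin_two, Matrix.smul_of,
        ← Matrix.ext_iff, Fin.forall_fin_two] at hqb
      rcases hl'' with rfl | rfl
      · rfl
      · have := hqb
        simp at this
    subst hlam''
    apply hirr
    refine ⟨1, -1, [-1, -1, -1], [1, 1, 1], Or.inl rfl, Or.inr rfl, ?_, ?_, by norm_num,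
      by norm_num, by norm_num, by norm_num, ⟨0, Or.inl ?_⟩⟩
    · simp [IsQC, qMat, Matrix.mul_fin_two, Matrix.one_fin_two, Matrix.smul_of]
    · simp [IsQC, qMat, Matrix.mul_fin_two, Matrix.one_fin_two, Matrix.smul_of]
    · rw [List.rotate_zero]
      norm_num [oplus]
  · -- a has length 4, b has length 3
    obtain ⟨b1, b2, b3, rfl⟩ := List.length_eq_three.mp hb3
    obtain ⟨a1, l, rfl⟩ : ∃ x l, a = x :: l := by
      cases a with
      | nil => simp at ha4
      | cons x l => exact ⟨x, l, rfl⟩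
    obtain ⟨a2, a3, a4, rfl⟩ : ∃ x y z, l = [x, y, z] := by
      apply List.length_eq_three.mp; simp at ha4; omega
    obtain ⟨-, e2, -⟩ := qc3 lam'' b1 b2 b3 hl'' hqb
    simp [oplus] at heq
    omega
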